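/- Let δ ∈ ℝ², σ ∈ {±1}², P ∈ GL₂(ℝ), and let ℤ^σ_P = ℤ² ∩ (Pᵀ)^{-1}(closure of R^{−σ}), where R^τ = I^τ(ℝ²_{>0}). Then the monomial p_n(z) = z₁^{n₁} z₂^{n₂}, viewed as a holomorphic function on the Reinhardt domain with logarithmic base Λ^σ_{P,δ} = P(I^σ(ℝ²_{>0}+δ)), satisfies sup_{r ∈ Λ^σ_{P,δ}} (2π)^{-2} ∫_{[0,2π]²} |p_n(e^{r+it})|² dt < ∞ if and only if n ∈ ℤ^σ_P, and in that case the supremum equals e^{2⟨n, v^σ_{P,δ}⟩} where v^σ_{P,δ} = P I^σ δ. -/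

import Mathlib

lemma exp_zpow' (x : ℝ) (m : ℤ) : Real.exp x ^ m = Real.exp (m * x) := by
  rw [← Real.rpow_intCast, Real.rpow_def_of_pos (Real.exp_pos x), Real.log_exp, mul_comm]

lemma Fval (n0 n1 : ℤ) (r0 r1 : ℝ) :
    ((2 * Real.pi) ^ 2)⁻¹ * ∫ t1 in (0 : ℝ)..(2 * Real.pi), ∫ t2 in (0 : ℝ)..(2 * Real.pi),
      ‖(Complex.exp ((r0 : ℂ) + (t1 : ℂ) * Complex.I)) ^ n0 *
        (Complex.exp ((r1 : ℂ) + (t2 : ℂ) * Complex.I)) ^ n1‖ ^ 2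
    = Real.exp (2 * (n0 * r0 + n1 * r1)) := by
  have habs : ∀ (r t : ℝ) (m : ℤ),
      ‖Complex.exp ((r : ℂ) + (t : ℂ) * Complex.I) ^ m‖ = Real.exp (m * r) := by
    intro r t m
    rw [norm_zpow, Complex.norm_exp, ← exp_zpow']
    simp
  have : ∀ t1 t2 : ℝ, ‖(Complex.exp ((r0 : ℂ) + (t1 : ℂ) * Complex.I)) ^ n0 *
        (Complex.exp ((r1 : ℂ) + (t2 : ℂ) * Complex.I)) ^ n1‖ ^ 2
      = Real.exp (2 * (n0 * r0 + n1 * r1)) := by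
    intro t1 t2
    rw [norm_mul, habs, habs, ← Real.exp_add, ← Real.exp_nat_mul]
    ring_nf
  simp only [this, intervalIntegral.integral_const, smul_eq_mul, sub_zero]
  have hπ : (2 * Real.pi) ≠ 0 := by positivity
  field_simp

/-- the monomial `p_n` has uniformly bounded polytorus `L²`-means over
the logarithmic base `Λ^σ_{P,δ}` iff `n ∈ ℤ^σ_P = ℤ² ∩ (Pᵀ)⁻¹(cl R^{−σ})`, and then
the supremum is `e^{2⟨n, v^σ_{P,δ}⟩}` with `v^σ_{P,δ} = P I^σ δ`. -/
theorem stmt16 (P : Matrix (Fin 2) (Fin 2) ℝ) (hP : IsUnit P.det)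
    (σ : Fin 2 → ℝ) (hσ : ∀ i, σ i = 1 ∨ σ i = -1) (δ : Fin 2 → ℝ) (n : Fin 2 → ℤ) :
    let Λ : Set (Fin 2 → ℝ) := {y | ∃ x : Fin 2 → ℝ, (∀ i, 0 < x i) ∧
      y = P.mulVec (fun i => σ i * (x i + δ i))}
    let v : Fin 2 → ℝ := P.mulVec (fun i => σ i * δ i)
    let F : (Fin 2 → ℝ) → ℝ := fun r =>
      ((2 * Real.pi) ^ 2)⁻¹ * ∫ t1 in (0 : ℝ)..(2 * Real.pi), ∫ t2 in (0 : ℝ)..(2 * Real.pi),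
        ‖(Complex.exp ((r 0 : ℂ) + (t1 : ℂ) * Complex.I)) ^ (n 0) *
          (Complex.exp ((r 1 : ℂ) + (t2 : ℂ) * Complex.I)) ^ (n 1)‖ ^ 2
    (BddAbove (F '' Λ) ↔
        (∀ i, σ i * (P.transpose.mulVec (fun j => ((n j : ℝ)))) i ≤ 0)) ∧
    ((∀ i, σ i * (P.transpose.mulVec (fun j => ((n j : ℝ)))) i ≤ 0) →
        sSup (F '' Λ) = Real.exp (2 * ∑ i, (n i : ℝ) * v i)) := by
  intro Λ v F
  set c : Fin 2 → ℝ := fun i => σ i * (P.transpose.mulVec (fun j => ((n j : ℝ)))) i with hc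
  set K : ℝ := ∑ i, (n i : ℝ) * v i with hK
  -- the key computation
  have hF : ∀ x : Fin 2 → ℝ,
      F (P.mulVec (fun i => σ i * (x i + δ i))) =
        Real.exp (2 * (c 0 * x 0 + c 1 * x 1 + K)) := by
    intro x
    show ((2 * Real.pi) ^ 2)⁻¹ * _ = _
    rw [Fval]
    congr 1
    simp only [hc, hK, v, Matrix.mulVec, dotProduct, Matrix.transpose_apply,
      Fin.sum_univ_two]
    ring
  -- membership description of the image
  have himg : ∀ y, y ∈ F '' Λ ↔ ∃ x : Fin 2 → ℝ, (∀ i, 0 < x i) ∧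
      y = Real.exp (2 * (c 0 * x 0 + c 1 * x 1 + K)) := by
    intro y
    constructor
    · rintro ⟨r, ⟨x, hx, rfl⟩, rfl⟩
      exact ⟨x, hx, hF x⟩
    · rintro ⟨x, hx, rfl⟩
      exact ⟨_, ⟨x, hx, rfl⟩, hF x⟩
  have hub : (∀ i, c i ≤ 0) → Real.exp (2 * K) ∈ upperBounds (F '' Λ) := by
    intro hcle y hy
    rw [himg] at hy
    obtain ⟨x, hx, rfl⟩ := hy
    apply Real.exp_le_exp.2
    have h0 : c 0 * x 0 ≤ 0 := mul_nonpos_of_nonpos_of_nonneg (hcle 0) (hx 0).le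
    have h1 : c 1 * x 1 ≤ 0 := mul_nonpos_of_nonpos_of_nonneg (hcle 1) (hx 1).le
    nlinarith
  constructor
  · constructor
    · -- bounded → c ≤ 0
      intro hbdd
      by_contra hcon
      push_neg at hcon
      obtain ⟨i, hi⟩ := hcon
      obtain ⟨b, hb⟩ := hbdd
      -- a family going to infinity
      have hxval : ∀ M : ℝ, c 0 * (if (0:Fin 2) = i then M else 1) +
          c 1 * (if (1:Fin 2) = i then M else 1) = c i * M + c (1 - i) * 1 := by
        intro M; fin_cases i <;> simp <;> ring
      have key : ∀ M : ℝ, 0 < M →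
          Real.exp (2 * (c i * M + c (1 - i) * 1 + K)) ≤ b := by
        intro M hM
        have hx : ∀ j, 0 < (fun j => if j = i then M else 1) j := fun j => by
          dsimp only; split <;> [exact hM; norm_num]
        have h := hb ((himg _).2 ⟨fun j => if j = i then M else 1, hx, rfl⟩)
        dsimp only at h
        rwa [hxval] at h
      have hi' : (0:ℝ) < c i := hi
      have htend : Filter.Tendsto (fun M : ℝ =>
          Real.exp (2 * (c i * M + c (1 - i) * 1 + K))) Filter.atTop Filter.atTop := by
        apply Real.tendsto_exp_atTop.comp
        have h0 : Filter.Tendsto (fun M : ℝ => (2 * c i) * M + 2 * (c (1 - i) * 1 + K))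
            Filter.atTop Filter.atTop :=
          Filter.tendsto_atTop_add_const_right _ _
            (Filter.Tendsto.const_mul_atTop (by linarith) Filter.tendsto_id)
        exact h0.congr (fun M => by ring)
      obtain ⟨M, hM1, hM2⟩ :=
        ((htend.eventually_gt_atTop b).and (Filter.eventually_gt_atTop 0)).exists
      exact absurd (key M hM2) (not_le.2 hM1)
    · -- c ≤ 0 → bounded
      intro hcle
      exact ⟨_, hub hcle⟩
  · -- the supremum
    intro hcle
    have hne : (F '' Λ).Nonempty := by
      refine ⟨Real.exp (2 * (c 0 * 1 + c 1 * 1 + K)), ?_⟩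
      rw [himg]
      exact ⟨fun _ => 1, fun _ => one_pos, rfl⟩
    apply IsLUB.csSup_eq _ hne
    constructor
    · exact hub hcle
    · intro b hb
      -- b is an upper bound; take limit along x = (t,t), t → 0⁺
      have hmem : ∀ t : ℝ, 0 < t →
          Real.exp (2 * (c 0 * t + c 1 * t + K)) ≤ b := by
        intro t ht
        apply hb
        rw [himg]
        exact ⟨fun _ => t, fun _ => ht, rfl⟩
      have hcont : Filter.Tendsto (fun t : ℝ => Real.exp (2 * (c 0 * t + c 1 * t + K)))
          (nhdsWithin 0 (Set.Ioi 0)) (nhds (Real.exp (2 * K))) := by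
        have : Continuous (fun t : ℝ => Real.exp (2 * (c 0 * t + c 1 * t + K))) := by
          fun_prop
        have h0 := this.tendsto 0
        simp only [mul_zero, zero_add] at h0
        exact h0.mono_left nhdsWithin_le_nhds
      exact le_of_tendsto hcont (eventually_mem_nhdsWithin.mono fun t ht => hmem t ht)
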